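/- Let A ⊂ ℤ\{0} be a finite symmetric set, let (z_a)_{a∈A} be real numbers with z_a = z_{−a} for all a ∈ A, and let K ≥ 0 satisfy Σ_{a∈A} z_a e(ax) ≥ −K for all x ∈ 𝕋. Then for every positive integer ℓ, Σ_{a∈A} z_a^{2ℓ} e(ax) ≥ −K^{2ℓ} for all x ∈ 𝕋. -/

import Mathlib

/-- `e(x) = e^{2πix}`. -/
noncomputable def eC (x : ℝ) : ℂ := Complex.exp (2 * Real.pi * Complex.I * x)


lemma eC_add (x y : ℝ) : eC (x + y) = eC x * eC y := by
  rw [eC, eC, eC, ← Complex.exp_add]; push_cast; ring_nf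

lemma eC_int (n : ℤ) : eC n = 1 := by
  rw [eC, show (2 * (Real.pi:ℂ) * Complex.I * (n:ℝ)) = (n:ℤ) * (2 * Real.pi * Complex.I) by push_cast; ring,
    Complex.exp_int_mul_two_pi_mul_I]

lemma eC_pow (x : ℝ) (n : ℕ) : eC x ^ n = eC (n * x) := by
  rw [eC, eC, ← Complex.exp_nat_mul]; push_cast; ring_nf

lemma eC_conj (x : ℝ) : (starRingEnd ℂ) (eC x) = eC (-x) := by
  rw [eC, show (2 * (Real.pi:ℂ) * Complex.I * (x:ℝ)) = ((2*Real.pi*x : ℝ):ℂ) * Complex.I by push_cast; ring,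
    ← Complex.exp_conj, map_mul, Complex.conj_ofReal, Complex.conj_I, eC]
  congr 1; push_cast; ring

lemma sum_eC_eq_zero (a : ℤ) (N : ℕ) (hN : 0 < N) (h : ¬ ((N:ℤ) ∣ a)) :
    ∑ j ∈ Finset.range N, eC ((a : ℝ) * (j / N)) = 0 := by
  have hNe : ((N:ℝ)) ≠ 0 := Nat.cast_ne_zero.mpr hN.ne'
  have hterm : ∀ j : ℕ, eC ((a:ℝ) * (j / N)) = eC ((a:ℝ) / N) ^ j := by
    intro j; rw [eC_pow]; congr 1; field_simp
  have hpi : (2 * (Real.pi:ℂ) * Complex.I) ≠ 0 := by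
    simp [Real.pi_ne_zero, Complex.I_ne_zero]
  have hx1 : eC ((a:ℝ) / N) ≠ 1 := by
    intro hx
    rw [eC, Complex.exp_eq_one_iff] at hx
    obtain ⟨n, hn⟩ := hx
    rw [mul_comm ((n:ℂ)) _] at hn
    have h2 : (((a:ℝ)/N : ℝ):ℂ) = (n:ℂ) := mul_left_cancel₀ hpi hn
    have h3 : (a:ℝ)/N = (n:ℝ) := by exact_mod_cast h2
    have h4 : (a:ℝ) = (n:ℝ) * N := by field_simp at h3; linarith
    have h5 : a = n * N := by exact_mod_cast h4
    exact h ⟨n, by linarith⟩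
  have hxN : eC ((a:ℝ) / N) ^ N = 1 := by
    rw [eC_pow, show (N:ℝ) * ((a:ℝ)/N) = ((a:ℤ):ℝ) by field_simp, eC_int]
  calc ∑ j ∈ Finset.range N, eC ((a:ℝ) * (j / N))
      = ∑ j ∈ Finset.range N, eC ((a:ℝ) / N) ^ j := by simp_rw [hterm]
    _ = (eC ((a:ℝ)/N) ^ N - 1) / (eC ((a:ℝ)/N) - 1) := geom_sum_eq hx1 N
    _ = 0 := by rw [hxN]; simp

lemma S_im (A : Finset ℤ) (hsym : ∀ a : ℤ, a ∈ A ↔ -a ∈ A)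
    (u : ℤ → ℝ) (hu : ∀ a ∈ A, u a = u (-a)) (x : ℝ) :
    (∑ a ∈ A, (u a : ℂ) * eC ((a:ℝ) * x)).im = 0 := by
  rw [← Complex.conj_eq_iff_im, map_sum]
  rw [show ∑ a ∈ A, (starRingEnd ℂ) ((u a : ℂ) * eC ((a:ℝ) * x))
      = ∑ a ∈ A, ((u (-a) : ℂ)) * eC (((-a : ℤ):ℝ) * x) by
    apply Finset.sum_congr rfl
    intro a ha
    rw [map_mul, Complex.conj_ofReal, eC_conj, ← hu a ha]
    push_cast; ring_nf]
  exact Finset.sum_nbij' (fun a => -a) (fun a => -a)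
    (fun a ha => (hsym a).mp ha) (fun a ha => by simpa using (hsym (-a)).mpr (by simpa using ha))
    (fun a _ => by ring) (fun a _ => by ring) (fun a _ => by simp)

lemma eC_zero : eC 0 = 1 := by simp [eC]

lemma conv_step (A : Finset ℤ) (h0 : (0:ℤ) ∉ A) (hsym : ∀ a : ℤ, a ∈ A ↔ -a ∈ A)
    (u v : ℤ → ℝ) (hu : ∀ a ∈ A, u a = u (-a)) (hv : ∀ a ∈ A, v a = v (-a))
    (C D : ℝ)
    (hC : ∀ x : ℝ, -C ≤ (∑ a ∈ A, (u a : ℂ) * eC ((a:ℝ)*x)).re)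
    (hD : ∀ x : ℝ, -D ≤ (∑ a ∈ A, (v a : ℂ) * eC ((a:ℝ)*x)).re) :
    ∀ x : ℝ, -(C*D) ≤ (∑ a ∈ A, ((u a * v a : ℝ) : ℂ) * eC ((a:ℝ)*x)).re := by
  intro x
  set M : ℕ := A.sup (fun a => a.natAbs) with hM
  set N : ℕ := 2 * M + 1 with hNdef
  have hN : 0 < N := Nat.succ_pos _
  have hNR : (0:ℝ) < N := by exact_mod_cast hN
  have hMle : ∀ a ∈ A, a.natAbs ≤ M := fun a ha => Finset.le_sup ha
  have hdvd1 : ∀ a ∈ A, ¬ ((N:ℤ) ∣ a) := by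
    intro a ha hdvd
    have hna : a ≠ 0 := fun h => h0 (h ▸ ha)
    have h1 : N ∣ a.natAbs := Int.natCast_dvd_natCast.mp (Int.dvd_natAbs.mpr hdvd)
    have h2 : N ≤ a.natAbs := Nat.le_of_dvd (Int.natAbs_pos.mpr hna) h1
    have := hMle a ha
    omega
  have hdvd2 : ∀ a ∈ A, ∀ b ∈ A, a ≠ b → ¬ ((N:ℤ) ∣ (a - b)) := by
    intro a ha b hb hab hdvd
    have h1 : N ∣ (a - b).natAbs := Int.natCast_dvd_natCast.mp (Int.dvd_natAbs.mpr hdvd)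
    have h2 : N ≤ (a - b).natAbs := Nat.le_of_dvd (Int.natAbs_pos.mpr (sub_ne_zero.mpr hab)) h1
    have h3 : (a - b).natAbs ≤ a.natAbs + b.natAbs := Int.natAbs_sub_le a b
    have := hMle a ha; have := hMle b hb
    omega
  set Su : ℝ → ℂ := fun t => ∑ a ∈ A, (u a : ℂ) * eC ((a:ℝ)*t) with hSu
  set Sv : ℝ → ℂ := fun t => ∑ a ∈ A, (v a : ℂ) * eC ((a:ℝ)*t) with hSv
  -- the convolution identity
  have key : ∀ a ∈ A, ∀ b ∈ A,
      (∑ j ∈ Finset.range N, eC (((a - b : ℤ):ℝ) * ((j:ℝ)/N))) = if a = b then (N:ℂ) else 0 := by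
    intro a ha b hb
    by_cases hab : a = b
    · simp [hab, eC_zero]
    · rw [if_neg hab]
      exact sum_eC_eq_zero (a - b) N hN (hdvd2 a ha b hb hab)
  have hconv : ∑ j ∈ Finset.range N, Su ((j:ℝ)/N) * Sv (x - (j:ℝ)/N)
      = (N:ℂ) * ∑ a ∈ A, ((u a * v a : ℝ) : ℂ) * eC ((a:ℝ)*x) := by
    calc ∑ j ∈ Finset.range N, Su ((j:ℝ)/N) * Sv (x - (j:ℝ)/N)
        = ∑ j ∈ Finset.range N, ∑ a ∈ A, ∑ b ∈ A,
            ((u a : ℂ) * (v b : ℂ) * eC ((b:ℝ)*x)) * eC (((a - b : ℤ):ℝ) * ((j:ℝ)/N)) := by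
          apply Finset.sum_congr rfl
          intro j _
          rw [hSu, hSv, Finset.sum_mul_sum]
          apply Finset.sum_congr rfl; intro a _
          apply Finset.sum_congr rfl; intro b _
          have : eC ((a:ℝ)*((j:ℝ)/N)) * eC ((b:ℝ)*(x - (j:ℝ)/N))
              = eC ((b:ℝ)*x) * eC (((a - b : ℤ):ℝ) * ((j:ℝ)/N)) := by
            rw [← eC_add, ← eC_add]; congr 1; push_cast; ring
          calc (u a : ℂ) * eC ((a:ℝ)*((j:ℝ)/N)) * ((v b : ℂ) * eC ((b:ℝ)*(x - (j:ℝ)/N)))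
              = (u a : ℂ) * (v b : ℂ) * (eC ((a:ℝ)*((j:ℝ)/N)) * eC ((b:ℝ)*(x - (j:ℝ)/N))) := by ring
            _ = ((u a : ℂ) * (v b : ℂ) * eC ((b:ℝ)*x)) * eC (((a - b : ℤ):ℝ) * ((j:ℝ)/N)) := by
                rw [this]; ring
      _ = ∑ a ∈ A, ∑ b ∈ A, ((u a : ℂ) * (v b : ℂ) * eC ((b:ℝ)*x)) *
            ∑ j ∈ Finset.range N, eC (((a - b : ℤ):ℝ) * ((j:ℝ)/N)) := by
          rw [Finset.sum_comm]
          apply Finset.sum_congr rfl; intro a _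
          rw [Finset.sum_comm]
          apply Finset.sum_congr rfl; intro b _
          rw [Finset.mul_sum]
      _ = ∑ a ∈ A, ((u a : ℂ) * (v a : ℂ) * eC ((a:ℝ)*x)) * (N:ℂ) := by
          apply Finset.sum_congr rfl; intro a ha
          rw [Finset.sum_eq_single a]
          · rw [key a ha a ha, if_pos rfl]
          · intro b hb hba
            rw [key a ha b hb, if_neg (Ne.symm hba)]  -- careful: key is over (a,b) order
            ring
          · intro h; exact absurd ha h
      _ = (N:ℂ) * ∑ a ∈ A, ((u a * v a : ℝ) : ℂ) * eC ((a:ℝ)*x) := by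
          rw [Finset.mul_sum]
          apply Finset.sum_congr rfl; intro a _
          push_cast; ring
  -- imaginary parts vanish
  have himu : ∀ t : ℝ, (Su t).im = 0 := fun t => S_im A hsym u hu t
  have himv : ∀ t : ℝ, (Sv t).im = 0 := fun t => S_im A hsym v hv t
  -- zero mean sums
  have hmean_u : ∑ j ∈ Finset.range N, (Su ((j:ℝ)/N)).re = 0 := by
    have : ∑ j ∈ Finset.range N, Su ((j:ℝ)/N) = 0 := by
      rw [hSu]
      rw [Finset.sum_comm]
      apply Finset.sum_eq_zero
      intro a ha
      rw [← Finset.mul_sum, sum_eC_eq_zero a N hN (hdvd1 a ha), mul_zero]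
    calc ∑ j ∈ Finset.range N, (Su ((j:ℝ)/N)).re
        = (∑ j ∈ Finset.range N, Su ((j:ℝ)/N)).re := (Complex.re_sum _ _).symm
      _ = 0 := by rw [this]; rfl
  have hmean_v : ∑ j ∈ Finset.range N, (Sv (x - (j:ℝ)/N)).re = 0 := by
    have : ∑ j ∈ Finset.range N, Sv (x - (j:ℝ)/N) = 0 := by
      rw [hSv]
      rw [Finset.sum_comm]
      apply Finset.sum_eq_zero
      intro a ha
      have hterm : ∀ j ∈ Finset.range N, (v a : ℂ) * eC ((a:ℝ)*(x - (j:ℝ)/N))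
          = ((v a : ℂ) * eC ((a:ℝ)*x)) * eC (((-a : ℤ):ℝ)*((j:ℝ)/N)) := by
        intro j _
        have : eC ((a:ℝ)*(x - (j:ℝ)/N)) = eC ((a:ℝ)*x) * eC (((-a : ℤ):ℝ)*((j:ℝ)/N)) := by
          rw [← eC_add]; congr 1; push_cast; ring
        rw [this]; ring
      rw [Finset.sum_congr rfl hterm, ← Finset.mul_sum,
        sum_eC_eq_zero (-a) N hN (fun h => hdvd1 a ha ((dvd_neg).mp h)), mul_zero]
    calc ∑ j ∈ Finset.range N, (Sv (x - (j:ℝ)/N)).re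
        = (∑ j ∈ Finset.range N, Sv (x - (j:ℝ)/N)).re := (Complex.re_sum _ _).symm
      _ = 0 := by rw [this]; rfl
  -- nonnegativity
  have hnonneg : 0 ≤ ∑ j ∈ Finset.range N,
      ((Su ((j:ℝ)/N)).re + C) * ((Sv (x - (j:ℝ)/N)).re + D) := by
    apply Finset.sum_nonneg
    intro j _
    apply mul_nonneg
    · have := hC ((j:ℝ)/N); rw [hSu]; simp only [Su] at *; linarith
    · have := hD (x - (j:ℝ)/N); rw [hSv]; simp only [Sv] at *; linarith
  have hre_mul : ∀ j : ℕ, (Su ((j:ℝ)/N)).re * (Sv (x - (j:ℝ)/N)).re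
      = (Su ((j:ℝ)/N) * Sv (x - (j:ℝ)/N)).re := by
    intro j
    rw [Complex.mul_re, himu, himv]; ring
  have hexp : ∑ j ∈ Finset.range N, ((Su ((j:ℝ)/N)).re + C) * ((Sv (x - (j:ℝ)/N)).re + D)
      = (∑ j ∈ Finset.range N, (Su ((j:ℝ)/N) * Sv (x - (j:ℝ)/N)).re)
        + D * (∑ j ∈ Finset.range N, (Su ((j:ℝ)/N)).re)
        + C * (∑ j ∈ Finset.range N, (Sv (x - (j:ℝ)/N)).re)
        + N * (C * D) := by
    have hterm : ∀ j ∈ Finset.range N,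
        ((Su ((j:ℝ)/N)).re + C) * ((Sv (x - (j:ℝ)/N)).re + D)
        = (Su ((j:ℝ)/N) * Sv (x - (j:ℝ)/N)).re + D * (Su ((j:ℝ)/N)).re
          + C * (Sv (x - (j:ℝ)/N)).re + C * D := by
      intro j _
      rw [← hre_mul j]; ring
    rw [Finset.sum_congr rfl hterm, Finset.sum_add_distrib, Finset.sum_add_distrib,
      Finset.sum_add_distrib, ← Finset.mul_sum, ← Finset.mul_sum, Finset.sum_const,
      Finset.card_range, nsmul_eq_mul]
  have hTsum : ∑ j ∈ Finset.range N, (Su ((j:ℝ)/N) * Sv (x - (j:ℝ)/N)).re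
      = (N:ℝ) * (∑ a ∈ A, ((u a * v a : ℝ) : ℂ) * eC ((a:ℝ)*x)).re := by
    rw [← Complex.re_sum, hconv, Complex.mul_re]
    norm_num
  rw [hexp, hTsum, hmean_u, hmean_v] at hnonneg
  nlinarith [hNR]



/-- Taking `2ℓ`-fold convolutions: if `∑ z_a e(ax) ≥ -K` pointwise, then
`∑ z_a^{2ℓ} e(ax) ≥ -K^{2ℓ}` pointwise. -/
theorem power_coefficients (A : Finset ℤ) (h0 : (0 : ℤ) ∉ A)
    (hsym : ∀ a : ℤ, a ∈ A ↔ -a ∈ A)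
    (z : ℤ → ℝ) (hz : ∀ a ∈ A, z a = z (-a)) (K : ℝ) (hK : 0 ≤ K)
    (hmin : ∀ x : ℝ, -K ≤ (∑ a ∈ A, (z a : ℂ) * eC ((a : ℝ) * x)).re) :
    ∀ ℓ : ℕ, 0 < ℓ → ∀ x : ℝ,
      -(K ^ (2 * ℓ)) ≤ (∑ a ∈ A, ((z a ^ (2 * ℓ) : ℝ) : ℂ) * eC ((a : ℝ) * x)).re := by
  have base : ∀ x : ℝ, -(K ^ 2) ≤ (∑ a ∈ A, ((z a ^ 2 : ℝ) : ℂ) * eC ((a : ℝ) * x)).re := by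
    intro x
    have := conv_step A h0 hsym z z hz hz K K hmin hmin x
    have he : (∑ a ∈ A, ((z a * z a : ℝ) : ℂ) * eC ((a:ℝ)*x))
        = ∑ a ∈ A, ((z a ^ 2 : ℝ) : ℂ) * eC ((a:ℝ)*x) := by
      apply Finset.sum_congr rfl; intro a _; rw [sq]
    rw [he] at this
    calc -(K ^ 2) = -(K * K) := by rw [sq]
      _ ≤ _ := this
  intro ℓ hℓ
  induction ℓ, hℓ using Nat.le_induction with
  | base =>
    intro x
    have := base x
    simpa using this
  | succ n hn ih =>
    intro x
    have step := conv_step A h0 hsym (fun a => z a ^ (2 * n)) (fun a => z a ^ 2)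
      (fun a ha => by rw [hz a ha]) (fun a ha => by rw [hz a ha])
      (K ^ (2 * n)) (K ^ 2) ih base x
    have he : (∑ a ∈ A, ((z a ^ (2 * n) * z a ^ 2 : ℝ) : ℂ) * eC ((a:ℝ)*x))
        = ∑ a ∈ A, ((z a ^ (2 * (n+1)) : ℝ) : ℂ) * eC ((a:ℝ)*x) := by
      apply Finset.sum_congr rfl; intro a _
      rw [← pow_add, show 2*n+2 = 2*(n+1) from by ring]
    rw [he] at step
    calc -(K ^ (2 * (n+1))) = -(K ^ (2 * n) * K ^ 2) := by
          rw [show 2*(n+1) = 2*n+2 from by ring, pow_add]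
      _ ≤ _ := step
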